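/- If Q is Weihrauch reducible to P, then the first-order part of Q is strongly Weihrauch reducible to the first-order part of P. In particular, Weihrauch equivalent problems have strongly Weihrauch equivalent first-order parts. -/

import Mathlib

open Classical

/-- A Turing functional, presented by a monotone computable map on finite prefixes
of the oracle. -/
structure Functional where
  eval : List ℕ → ℕ → Option ℕ
  mono : ∀ σ τ x y, σ <+: τ → eval σ x = some y → eval τ x = some y
  comp : Computable₂ eval

/-- The finite initial segment of `f` of length `k`. -/
def initSeg (f : ℕ → ℕ) (k : ℕ) : List ℕ := (List.range k).map f

/-- `Φ(f)(x)` converges with value `y`. -/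
def Functional.conv (Φ : Functional) (f : ℕ → ℕ) (x y : ℕ) : Prop :=
  ∃ k, Φ.eval (initSeg f k) x = some y

/-- Total application: `Φ(f) = g`. -/
def Functional.Total (Φ : Functional) (f g : ℕ → ℕ) : Prop :=
  ∀ x, Φ.conv f x (g x)

/-- The Turing join of two elements of Baire space. -/
def join (f g : ℕ → ℕ) : ℕ → ℕ := fun n => if n % 2 = 0 then f (n / 2) else g (n / 2)

/-- The embedding of `ℕ` into Baire space: `n` is identified with `n,0,0,0,…`. -/
def natSeq (n : ℕ) : ℕ → ℕ := fun i => if i = 0 then n else 0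

/-- A problem: a partial multifunction on Baire space, given by its domain
(the set of instances) and, for each instance, its set of solutions. -/
structure Problem where
  dom : Set (ℕ → ℕ)
  sol : (ℕ → ℕ) → Set (ℕ → ℕ)

/-- Weihrauch reducibility `Q ≤_W P`. -/
def WRed (Q P : Problem) : Prop :=
  ∃ Φ Ψ : Functional, ∀ f ∈ Q.dom, ∃ h, Φ.Total f h ∧ h ∈ P.dom ∧
    ∀ g ∈ P.sol h, ∃ y, Ψ.Total (join f g) y ∧ y ∈ Q.sol f

/-- Strong Weihrauch reducibility `Q ≤_sW P`: the backward functional only sees the solution. -/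
def SRed (Q P : Problem) : Prop :=
  ∃ Φ Ψ : Functional, ∀ f ∈ Q.dom, ∃ h, Φ.Total f h ∧ h ∈ P.dom ∧
    ∀ g ∈ P.sol h, ∃ y, Ψ.Total g y ∧ y ∈ Q.sol f

/-- Weihrauch equivalence. -/
def WEquiv (Q P : Problem) : Prop := WRed Q P ∧ WRed P Q

/-- Strong Weihrauch equivalence. -/
def SEquiv (Q P : Problem) : Prop := SRed Q P ∧ SRed P Q

/-- A problem is first-order if all its solutions are natural numbers
(under the identification of `n` with `natSeq n`). -/
def FirstOrder (P : Problem) : Prop :=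
  ∀ f ∈ P.dom, ∀ g ∈ P.sol f, ∃ n, g = natSeq n

/-- The code of a functional as an element of Baire space (the graph of its
prefix-evaluation function). -/
def Functional.graph (Φ : Functional) : ℕ → ℕ :=
  fun n => Encodable.encode (Φ.eval (Denumerable.ofNat (List ℕ) n.unpair.1) n.unpair.2)

/-- The first-order part `¹P` of a problem `P`: instances are (codes of) triples
`⟨f,Φ,Ψ⟩` with `Φ(f) ∈ dom(P)` and `Ψ(f,g)(0)↓` for all `g ∈ P(Φ(f))`; the
solutions are all values `Ψ(f,g)(0)` for `g ∈ P(Φ(f))`. -/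
def FOPart (P : Problem) : Problem where
  dom := { h | ∃ (f : ℕ → ℕ) (Φ Ψ : Functional), h = join f (join Φ.graph Ψ.graph) ∧
    ∃ p, Φ.Total f p ∧ p ∈ P.dom ∧ ∀ g ∈ P.sol p, ∃ y, Ψ.conv (join f g) 0 y }
  sol h := { w | ∃ (f : ℕ → ℕ) (Φ Ψ : Functional) (p g : ℕ → ℕ) (y : ℕ),
    h = join f (join Φ.graph Ψ.graph) ∧ Φ.Total f p ∧ p ∈ P.dom ∧ g ∈ P.sol p ∧
    Ψ.conv (join f g) 0 y ∧ w = natSeq y }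

/-- `P` is computably true: every instance computes one of its solutions. -/
def ComputablyTrue (P : Problem) : Prop :=
  ∀ f ∈ P.dom, ∃ g ∈ P.sol f, ∃ Φ : Functional, Φ.Total f g

/-- `P` is uniformly computably true: a single functional solves every instance. -/
def UnifCompTrue (P : Problem) : Prop :=
  ∃ Φ : Functional, ∀ f ∈ P.dom, ∃ g, Φ.Total f g ∧ g ∈ P.sol f

/-- `σ` is a finite initial segment of some `P`-solution to `f`. -/
def Extendible (P : Problem) (f : ℕ → ℕ) (σ : List ℕ) : Prop :=
  ∃ g ∈ P.sol f, σ = initSeg g σ.length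

/-- `P` is undiagonalizable: the set of strings extendible to a solution is
uniformly decidable from the instance. -/
def Undiag (P : Problem) : Prop :=
  ∃ Γ : Functional, ∀ f ∈ P.dom, ∀ σ : List ℕ,
    (Extendible P f σ → Γ.conv f (Encodable.encode σ) 1) ∧
    (¬ Extendible P f σ → Γ.conv f (Encodable.encode σ) 0)

section Basics

open Encodable

lemma initSeg_length (f : ℕ → ℕ) (k : ℕ) : (initSeg f k).length = k := by
  simp [initSeg]

lemma initSeg_getElem? (f : ℕ → ℕ) {k i : ℕ} (h : i < k) :
    (initSeg f k)[i]? = some (f i) := by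
  simp [initSeg, h]

lemma initSeg_getD (f : ℕ → ℕ) {k i : ℕ} (h : i < k) :
    (initSeg f k).getD i 0 = f i := by
  simp [List.getD, initSeg_getElem? f h]

lemma initSeg_take (f : ℕ → ℕ) (m k : ℕ) :
    (initSeg f m).take k = initSeg f (min k m) := by
  simp [initSeg, ← List.map_take, List.take_range]

lemma initSeg_prefix (f : ℕ → ℕ) {k m : ℕ} (h : k ≤ m) :
    initSeg f k <+: initSeg f m := by
  have := initSeg_take f m k
  rw [min_eq_left h] at this
  exact this ▸ List.take_prefix _ _

lemma initSeg_succ (f : ℕ → ℕ) (k : ℕ) :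
    initSeg f (k + 1) = initSeg f k ++ [f k] := by
  simp [initSeg, List.range_succ]

namespace Functional

lemma eval_initSeg_unique (Φ : Functional) {f : ℕ → ℕ} {x y y' k k'}
    (h : Φ.eval (initSeg f k) x = some y) (h' : Φ.eval (initSeg f k') x = some y') :
    y = y' := by
  have h1 := Φ.mono _ _ _ _ (initSeg_prefix f (le_max_left k k')) h
  have h2 := Φ.mono _ _ _ _ (initSeg_prefix f (le_max_right k k')) h'
  rw [h1] at h2; exact Option.some_injective _ h2

lemma conv_unique (Φ : Functional) {f x y y'} (h : Φ.conv f x y) (h' : Φ.conv f x y') :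
    y = y' := by
  obtain ⟨k, hk⟩ := h; obtain ⟨k', hk'⟩ := h'
  exact Φ.eval_initSeg_unique hk hk'

lemma total_eval (Φ : Functional) {f p : ℕ → ℕ} (h : Φ.Total f p) {k x y}
    (he : Φ.eval (initSeg f k) x = some y) : y = p x :=
  Φ.conv_unique ⟨k, he⟩ (h x)

lemma total_unique (Φ : Functional) {f p p' : ℕ → ℕ} (h : Φ.Total f p)
    (h' : Φ.Total f p') : p = p' := by
  funext x
  obtain ⟨k, hk⟩ := h x
  exact Φ.total_eval h' hk

lemma graph_pair (Φ : Functional) (τ : List ℕ) (x : ℕ) :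
    Φ.graph (Nat.pair (encode τ) x) = encode (Φ.eval τ x) := by
  simp [Functional.graph]

lemma eval_eq_of_graph_eq {Φ Φ' : Functional} (h : Φ.graph = Φ'.graph) :
    Φ.eval = Φ'.eval := by
  funext τ x
  have := congrFun h (Nat.pair (encode τ) x)
  rw [graph_pair, graph_pair] at this
  exact encode_injective this

lemma conv_congr {Φ Φ' : Functional} (h : Φ.eval = Φ'.eval) {f x y} :
    Φ.conv f x y → Φ'.conv f x y := by
  intro ⟨k, hk⟩; exact ⟨k, h ▸ hk⟩

lemma total_congr {Φ Φ' : Functional} (h : Φ.eval = Φ'.eval) {f p} :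
    Φ.Total f p → Φ'.Total f p := fun ht x => conv_congr h (ht x)

end Functional

lemma join_even (f g : ℕ → ℕ) (n : ℕ) : join f g (2 * n) = f n := by
  simp [join, Nat.mul_mod_right, Nat.mul_div_cancel_left _ (by norm_num : (0:ℕ) < 2)]

lemma join_odd (f g : ℕ → ℕ) (n : ℕ) : join f g (2 * n + 1) = g n := by
  have h1 : (2 * n + 1) % 2 = 1 := by omega
  have h2 : (2 * n + 1) / 2 = n := by omega
  simp [join, h1, h2]

lemma join_inj {f g f' g' : ℕ → ℕ} (h : join f g = join f' g') : f = f' ∧ g = g' := by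
  constructor
  · funext n
    have := congrFun h (2 * n); rwa [join_even, join_even] at this
  · funext n
    have := congrFun h (2 * n + 1); rwa [join_odd, join_odd] at this

end Basics
section Combinators

open Encodable

/-- first `some` value of `F k` for `k < n` -/
def firstVal (F : ℕ → Option ℕ) : ℕ → Option ℕ
  | 0 => none
  | n + 1 => ((firstVal F n).map Option.some).getD (F n)

lemma firstVal_mono {F : ℕ → Option ℕ} {m n y} (h : m ≤ n) (hy : firstVal F m = some y) :
    firstVal F n = some y := by
  induction n with
  | zero =>
    have hm : m = 0 := by omega
    subst hm; exact hy
  | succ n ih =>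
    rcases Nat.eq_or_lt_of_le h with rfl | hlt
    · exact hy
    · have := ih (by omega)
      simp [firstVal, this]

lemma firstVal_some {F : ℕ → Option ℕ} {n y} (h : firstVal F n = some y) :
    ∃ k < n, F k = some y := by
  induction n with
  | zero => simp [firstVal] at h
  | succ n ih =>
    rcases hc : firstVal F n with _ | y'
    · rw [firstVal, hc] at h
      exact ⟨n, Nat.lt_succ_self n, by simpa using h⟩
    · rw [firstVal, hc] at h
      simp at h
      obtain ⟨k, hk, hF⟩ := ih (h ▸ hc)
      exact ⟨k, by omega, hF⟩

lemma firstVal_isSome {F : ℕ → Option ℕ} {n k} (h : k < n) (hk : (F k).isSome) :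
    (firstVal F n).isSome := by
  induction n with
  | zero => omega
  | succ n ih =>
    rcases hc : firstVal F n with _ | y'
    · rcases Nat.lt_succ_iff_lt_or_eq.mp h with h' | rfl
      · have := ih h'; rw [hc] at this; simp at this
      · simp [firstVal, hc, hk]
    · simp [firstVal, hc]

lemma firstVal_congr {F G : ℕ → Option ℕ} {n} (h : ∀ k < n, F k = G k) :
    firstVal F n = firstVal G n := by
  induction n with
  | zero => rfl
  | succ n ih =>
    rw [firstVal, firstVal, ih (fun k hk => h k (by omega)), h n (Nat.lt_succ_self n)]

/-- longest all-defined prefix of values of `F` below `n` -/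
def defPrefix (F : ℕ → Option ℕ) : ℕ → List ℕ
  | 0 => []
  | n + 1 =>
    if (defPrefix F n).length = n then
      ((F n).map (fun y => defPrefix F n ++ [y])).getD (defPrefix F n)
    else defPrefix F n

lemma defPrefix_correct {F : ℕ → Option ℕ} {p : ℕ → ℕ}
    (hF : ∀ i y, F i = some y → y = p i) (n : ℕ) :
    defPrefix F n = initSeg p (defPrefix F n).length := by
  induction n with
  | zero => rfl
  | succ n ih =>
    rw [defPrefix]
    by_cases hl : (defPrefix F n).length = n
    · rcases hc : F n with _ | y
      · simp only [if_pos hl, hc, Option.map_none, Option.getD_none]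
        exact ih
      · have hy := hF n y hc
        simp only [if_pos hl, hc, Option.map_some, Option.getD_some]
        rw [List.length_append, List.length_singleton, hl, initSeg_succ, ← hy]
        conv_lhs => rw [ih, hl]
    · simp only [hl, if_false]; exact ih

lemma defPrefix_length_le {F : ℕ → Option ℕ} (n : ℕ) : (defPrefix F n).length ≤ n := by
  induction n with
  | zero => simp [defPrefix]
  | succ n ih =>
    rw [defPrefix]
    by_cases hl : (defPrefix F n).length = n
    · rcases hc : F n with _ | y
      · simp [hl, hc]
      · simp [hl, hc]
    · simp [hl]; omega

lemma defPrefix_length_eq {F : ℕ → Option ℕ} {m : ℕ} (hF : ∀ i < m, (F i).isSome) :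
    ∀ n ≤ m, (defPrefix F n).length = n := by
  intro n
  induction n with
  | zero => intro _; rfl
  | succ n ih =>
    intro hn
    have hl := ih (by omega)
    rcases hc : F n with _ | y
    · have := hF n (by omega); rw [hc] at this; simp at this
    · rw [defPrefix, if_pos hl, hc]
      simp [hl]

lemma defPrefix_length_mono {F : ℕ → Option ℕ} {n n' : ℕ} (h : n ≤ n') :
    (defPrefix F n).length ≤ (defPrefix F n').length := by
  induction n' with
  | zero => have : n = 0 := by omega
            subst this; exact le_rfl
  | succ n' ih =>
    rcases Nat.eq_or_lt_of_le h with rfl | hlt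
    · exact le_rfl
    · refine le_trans (ih (by omega)) ?_
      rw [defPrefix]
      by_cases hl : (defPrefix F n').length = n'
      · rcases hc : F n' with _ | y
        · simp [hl, hc]
        · simp [hl, hc]
      · simp [hl]

lemma defPrefix_big {F : ℕ → Option ℕ} {m n : ℕ} (hF : ∀ i < m, (F i).isSome)
    (h : m ≤ n) : m ≤ (defPrefix F n).length :=
  (defPrefix_length_eq hF m le_rfl) ▸ defPrefix_length_mono h

/-- a `take` implemented with `range`/`map` for computability convenience -/
def take' (σ : List ℕ) (k : ℕ) : List ℕ :=
  (List.range (min k σ.length)).map (fun i => σ.getD i 0)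

lemma take'_initSeg (f : ℕ → ℕ) (m k : ℕ) :
    take' (initSeg f m) k = initSeg f (min k m) := by
  rw [take', initSeg_length, initSeg]
  apply List.map_congr_left
  intro i hi
  rw [List.mem_range] at hi
  exact initSeg_getD f (by omega)

lemma take'_self (σ : List ℕ) : take' σ σ.length = σ := by
  rw [take', min_self]
  apply List.ext_getElem
  · simp
  · intro i h1 h2
    simp [List.getD_eq_getElem?_getD, List.getElem?_eq_getElem h2]

lemma prefix_getD {σ τ : List ℕ} (h : σ <+: τ) {i : ℕ} (hi : i < σ.length) :
    τ.getD i 0 = σ.getD i 0 := by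
  obtain ⟨t, rfl⟩ := h
  simp [List.getD_eq_getElem?_getD, List.getElem?_append_left hi]

lemma take'_prefix_eq {σ τ : List ℕ} (h : σ <+: τ) {k : ℕ} (hk : k ≤ σ.length) :
    take' τ k = take' σ k := by
  have hlen : σ.length ≤ τ.length := h.length_le
  rw [take', take', min_eq_left (by omega), min_eq_left (by omega)]
  apply List.map_congr_left
  intro i hi
  rw [List.mem_range] at hi
  exact prefix_getD h (by omega)

/-- monotonization of an arbitrary prefix-evaluation -/
def monoEval (e : List ℕ → ℕ → Option ℕ) (σ : List ℕ) (x : ℕ) : Option ℕ :=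
  firstVal (fun k => e (take' σ k) x) (σ.length + 1)

lemma monoEval_mono (e : List ℕ → ℕ → Option ℕ) :
    ∀ σ τ x y, σ <+: τ → monoEval e σ x = some y → monoEval e τ x = some y := by
  intro σ τ x y h hy
  rw [monoEval] at hy ⊢
  have h1 : firstVal (fun k => e (take' σ k) x) (σ.length + 1)
      = firstVal (fun k => e (take' τ k) x) (σ.length + 1) := by
    apply firstVal_congr
    intro k hk
    rw [take'_prefix_eq h (by omega)]
  rw [h1] at hy
  exact firstVal_mono (by have := h.length_le; omega) hy

lemma monoEval_some {e : List ℕ → ℕ → Option ℕ} {σ x y} (h : monoEval e σ x = some y) :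
    ∃ k ≤ σ.length, e (take' σ k) x = some y := by
  obtain ⟨k, hk, hF⟩ := firstVal_some h
  exact ⟨k, by omega, hF⟩

lemma monoEval_isSome {e : List ℕ → ℕ → Option ℕ} {σ x} (h : (e σ x).isSome) :
    (monoEval e σ x).isSome := by
  apply firstVal_isSome (Nat.lt_succ_self _)
  rwa [take'_self]

/-- read the value `Φ.eval τ x` off a prefix `G` of the graph of `Φ` -/
def readGraph (G τ : List ℕ) (x : ℕ) : Option ℕ :=
  if Nat.pair (encode τ) x < G.length then
    (Encodable.decode (α := Option ℕ) (G.getD (Nat.pair (encode τ) x) 0)).getD none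
  else none

lemma readGraph_correct {Φ : Functional} {N : ℕ} {τ : List ℕ} {x y : ℕ}
    (h : readGraph (initSeg Φ.graph N) τ x = some y) : Φ.eval τ x = some y := by
  rw [readGraph, initSeg_length] at h
  split at h
  · rw [initSeg_getD _ (by assumption), Functional.graph_pair, encodek] at h
    simpa using h
  · simp at h

lemma readGraph_complete {Φ : Functional} {N : ℕ} {τ : List ℕ} {x y : ℕ}
    (he : Φ.eval τ x = some y) (hN : Nat.pair (encode τ) x < N) :
    readGraph (initSeg Φ.graph N) τ x = some y := by
  rw [readGraph, initSeg_length, if_pos hN, initSeg_getD _ hN, Functional.graph_pair,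
    encodek, Option.getD_some, he]

/-- interleave two finite sequences -/
def joinList (a b : List ℕ) : List ℕ :=
  (List.range (2 * min a.length b.length)).map
    (fun n => if n % 2 = 0 then a.getD (n / 2) 0 else b.getD (n / 2) 0)

lemma joinList_initSeg (p g : ℕ → ℕ) (m m' : ℕ) :
    joinList (initSeg p m) (initSeg g m') = initSeg (join p g) (2 * min m m') := by
  rw [joinList, initSeg_length, initSeg_length]
  conv_rhs => rw [initSeg]
  apply List.map_congr_left
  intro n hn
  rw [List.mem_range] at hn
  by_cases h2 : n % 2 = 0
  · rw [if_pos h2, initSeg_getD p (by omega), join, if_pos h2]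
  · rw [if_neg h2, initSeg_getD g (by omega), join, if_neg h2]

/-- the even part of a finite sequence -/
def evens (σ : List ℕ) : List ℕ :=
  (List.range ((σ.length + 1) / 2)).map (fun i => σ.getD (2 * i) 0)

/-- the odd part of a finite sequence -/
def odds (σ : List ℕ) : List ℕ :=
  (List.range (σ.length / 2)).map (fun i => σ.getD (2 * i + 1) 0)

lemma evens_initSeg (f g : ℕ → ℕ) (n : ℕ) :
    evens (initSeg (join f g) n) = initSeg f ((n + 1) / 2) := by
  rw [evens, initSeg_length]
  conv_rhs => rw [initSeg]
  apply List.map_congr_left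
  intro i hi
  rw [List.mem_range] at hi
  rw [initSeg_getD _ (by omega), join_even]

lemma odds_initSeg (f g : ℕ → ℕ) (n : ℕ) :
    odds (initSeg (join f g) n) = initSeg g (n / 2) := by
  rw [odds, initSeg_length]
  conv_rhs => rw [initSeg]
  apply List.map_congr_left
  intro i hi
  rw [List.mem_range] at hi
  rw [initSeg_getD _ (by omega), join_odd]

end Combinators
section Computability

open Encodable Primrec

lemma take'_primrec : Primrec₂ take' := by
  have h1 : Primrec (fun p : List ℕ × ℕ => List.range (min p.2 p.1.length)) :=
    Primrec.list_range.comp (Primrec.nat_min.comp Primrec.snd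
      (Primrec.list_length.comp Primrec.fst))
  have h2 : Primrec₂ (fun (p : List ℕ × ℕ) (i : ℕ) => p.1.getD i 0) :=
    ((Primrec.list_getD 0).comp (Primrec.fst.comp Primrec.fst) Primrec.snd).to₂
  exact (Primrec.list_map h1 h2).to₂

lemma evens_primrec : Primrec evens := by
  have h1 : Primrec (fun σ : List ℕ => List.range ((σ.length + 1) / 2)) :=
    Primrec.list_range.comp (Primrec.nat_div.comp
      (Primrec.succ.comp Primrec.list_length) (Primrec.const 2))
  have h2 : Primrec₂ (fun (σ : List ℕ) (i : ℕ) => σ.getD (2 * i) 0) :=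
    ((Primrec.list_getD 0).comp Primrec.fst
      (Primrec.nat_mul.comp (Primrec.const 2) Primrec.snd)).to₂
  exact Primrec.list_map h1 h2

lemma odds_primrec : Primrec odds := by
  have h1 : Primrec (fun σ : List ℕ => List.range (σ.length / 2)) :=
    Primrec.list_range.comp (Primrec.nat_div.comp Primrec.list_length (Primrec.const 2))
  have h2 : Primrec₂ (fun (σ : List ℕ) (i : ℕ) => σ.getD (2 * i + 1) 0) :=
    ((Primrec.list_getD 0).comp Primrec.fst
      (Primrec.succ.comp (Primrec.nat_mul.comp (Primrec.const 2) Primrec.snd))).to₂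
  exact Primrec.list_map h1 h2

lemma joinList_primrec : Primrec₂ joinList := by
  have h1 : Primrec (fun p : List ℕ × List ℕ => List.range (2 * min p.1.length p.2.length)) :=
    Primrec.list_range.comp (Primrec.nat_mul.comp (Primrec.const 2)
      (Primrec.nat_min.comp (Primrec.list_length.comp Primrec.fst)
        (Primrec.list_length.comp Primrec.snd)))
  have h2 : Primrec₂ (fun (p : List ℕ × List ℕ) (n : ℕ) =>
      if n % 2 = 0 then p.1.getD (n / 2) 0 else p.2.getD (n / 2) 0) := by
    have hc : PrimrecPred (fun q : (List ℕ × List ℕ) × ℕ => q.2 % 2 = 0) :=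
      Primrec.eq.comp (Primrec.nat_mod.comp Primrec.snd (Primrec.const 2)) (Primrec.const 0)
    have hd : Primrec (fun q : (List ℕ × List ℕ) × ℕ => q.2 / 2) :=
      Primrec.nat_div.comp Primrec.snd (Primrec.const 2)
    exact (Primrec.ite hc
      ((Primrec.list_getD 0).comp (Primrec.fst.comp Primrec.fst) hd)
      ((Primrec.list_getD 0).comp (Primrec.snd.comp Primrec.fst) hd)).to₂
  exact (Primrec.list_map h1 h2).to₂

lemma readGraph_primrec : Primrec (fun q : (List ℕ × List ℕ) × ℕ => readGraph q.1.1 q.1.2 q.2) := by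
  have hpos : Primrec (fun q : (List ℕ × List ℕ) × ℕ => Nat.pair (encode q.1.2) q.2) :=
    Primrec₂.natPair.comp (Primrec.encode.comp (Primrec.snd.comp Primrec.fst)) Primrec.snd
  have hc : PrimrecPred (fun q : (List ℕ × List ℕ) × ℕ =>
      Nat.pair (encode q.1.2) q.2 < q.1.1.length) :=
    Primrec.nat_lt.comp hpos (Primrec.list_length.comp (Primrec.fst.comp Primrec.fst))
  have hval : Primrec (fun q : (List ℕ × List ℕ) × ℕ =>
      (Encodable.decode (α := Option ℕ) (q.1.1.getD (Nat.pair (encode q.1.2) q.2) 0)).getD none) :=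
    Primrec.option_getD.comp
      (Primrec.decode.comp ((Primrec.list_getD 0).comp (Primrec.fst.comp Primrec.fst) hpos))
      (Primrec.const none)
  exact (Primrec.ite hc hval (Primrec.const none)).of_eq fun q => by rw [readGraph]

lemma firstVal_computable {α : Type} [Primcodable α] {F : α → ℕ → Option ℕ} {n : α → ℕ}
    (hF : Computable₂ F) (hn : Computable n) :
    Computable fun a => firstVal (F a) (n a) := by
  have step : Computable₂ (fun (a : α) (p : ℕ × Option ℕ) =>
      ((p.2.map Option.some).getD (F a p.1))) := by
    have h1 : Computable (fun q : α × (ℕ × Option ℕ) => (q.2.2.map Option.some)) :=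
      Computable.option_map (Computable.snd.comp Computable.snd)
        (Computable.option_some.comp Computable.snd).to₂
    exact (Computable.option_getD h1
      (hF.comp Computable.fst (Computable.fst.comp Computable.snd))).to₂
  exact (Computable.nat_rec hn (Computable.const none) step).of_eq fun a => by
    induction n a with
    | zero => rfl
    | succ k ih => rw [firstVal, ← ih]

lemma defPrefix_computable {α : Type} [Primcodable α] {F : α → ℕ → Option ℕ} {n : α → ℕ}
    (hF : Computable₂ F) (hn : Computable n) :
    Computable fun a => defPrefix (F a) (n a) := by
  have step : Computable₂ (fun (a : α) (p : ℕ × List ℕ) =>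
      if p.2.length = p.1 then ((F a p.1).map (fun y => p.2 ++ [y])).getD p.2 else p.2) := by
    have hc : Computable (fun q : α × (ℕ × List ℕ) => decide (q.2.2.length = q.2.1)) :=
      (Primrec.eq.comp (Primrec.list_length.comp (Primrec.snd.comp Primrec.snd))
        (Primrec.fst.comp Primrec.snd)).decide.to_comp
    have hthen : Computable (fun q : α × (ℕ × List ℕ) =>
        ((F q.1 q.2.1).map (fun y => q.2.2 ++ [y])).getD q.2.2) := by
      have hmap : Computable (fun q : α × (ℕ × List ℕ) =>
          (F q.1 q.2.1).map (fun y => q.2.2 ++ [y])) :=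
        Computable.option_map (hF.comp Computable.fst (Computable.fst.comp Computable.snd))
          ((Computable.list_concat.comp
            ((Computable.snd.comp Computable.snd).comp Computable.fst)
            Computable.snd).to₂)
      exact Computable.option_getD hmap (Computable.snd.comp Computable.snd)
    have helse : Computable (fun q : α × (ℕ × List ℕ) => q.2.2) :=
      Computable.snd.comp Computable.snd
    exact (Computable.cond hc hthen helse).of_eq fun q => by
      by_cases h : q.2.2.length = q.2.1 <;> simp [h]
  exact (Computable.nat_rec hn (Computable.const []) step).of_eq fun a => by
    induction n a with
    | zero => rfl
    | succ k ih => rw [defPrefix, ← ih]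

lemma monoEval_computable {e : List ℕ → ℕ → Option ℕ} (he : Computable₂ e) :
    Computable₂ (monoEval e) := by
  have hF : Computable₂ (fun (p : List ℕ × ℕ) (k : ℕ) => e (take' p.1 k) p.2) :=
    (he.comp (take'_primrec.to_comp.comp (Computable.fst.comp Computable.fst) Computable.snd)
      (Computable.snd.comp Computable.fst)).to₂
  have hn : Computable (fun p : List ℕ × ℕ => p.1.length + 1) :=
    (Primrec.succ.comp (Primrec.list_length.comp Primrec.fst)).to_comp
  exact (firstVal_computable hF hn).to₂

end Computability
section Constructions

open Encodable

/-- value of `A(f)` at `i`, read from a prefix `f` of the oracle and a prefix `G` of the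
graph of `A` -/
def pVal (f G : List ℕ) (i : ℕ) : Option ℕ :=
  firstVal (fun k => readGraph G (take' f k) i) (f.length + 1)

lemma pVal_computable : Computable (fun q : (List ℕ × List ℕ) × ℕ => pVal q.1.1 q.1.2 q.2) := by
  have hF : Computable₂ (fun (q : (List ℕ × List ℕ) × ℕ) (k : ℕ) =>
      readGraph q.1.2 (take' q.1.1 k) q.2) := by
    have := readGraph_primrec.comp (α := ((List ℕ × List ℕ) × ℕ) × ℕ)
      (Primrec.pair
        (Primrec.pair ((Primrec.snd.comp Primrec.fst).comp Primrec.fst)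
          (take'_primrec.comp ((Primrec.fst.comp Primrec.fst).comp Primrec.fst) Primrec.snd))
        (Primrec.snd.comp Primrec.fst))
    exact this.to_comp.to₂
  have hn : Computable (fun q : (List ℕ × List ℕ) × ℕ => q.1.1.length + 1) :=
    (Primrec.succ.comp (Primrec.list_length.comp (Primrec.fst.comp Primrec.fst))).to_comp
  exact firstVal_computable hF hn

/-- the forward inner functional: from the oracle `h = ⟨f,A,B⟩` compute `Φ(A(f))` -/
def phi1eval (E : List ℕ → ℕ → Option ℕ) (σ : List ℕ) (x : ℕ) : Option ℕ :=
  E (defPrefix (pVal (evens σ) (evens (odds σ))) σ.length) x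

lemma phi1eval_computable {E : List ℕ → ℕ → Option ℕ} (hE : Computable₂ E) :
    Computable₂ (phi1eval E) := by
  have hd : Computable (fun σ : List ℕ => defPrefix (pVal (evens σ) (evens (odds σ))) σ.length) := by
    have hF : Computable₂ (fun (σ : List ℕ) (i : ℕ) => pVal (evens σ) (evens (odds σ)) i) := by
      have := pVal_computable.comp (α := List ℕ × ℕ)
        ((Primrec.pair
          (Primrec.pair (evens_primrec.comp Primrec.fst)
            (evens_primrec.comp (odds_primrec.comp Primrec.fst)))
          Primrec.snd).to_comp)
      exact this.to₂
    exact defPrefix_computable hF Primrec.list_length.to_comp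
  exact (hE.comp (hd.comp Computable.fst) Computable.snd).to₂

/-- monotonized version, as a `Functional` -/
def Phi1 (Φ : Functional) : Functional where
  eval := monoEval (phi1eval Φ.eval)
  mono := monoEval_mono _
  comp := monoEval_computable (phi1eval_computable Φ.comp)

/-- the backward inner functional: from the oracle `⟨h, g⟩ = ⟨⟨f,A,B⟩, g⟩` compute
`B(⟨f, Ψ(⟨A(f), g⟩)⟩)` -/
def psi1eval (E : List ℕ → ℕ → Option ℕ) (σ : List ℕ) (x : ℕ) : Option ℕ :=
  firstVal
    (fun k =>
      readGraph (odds (odds (evens σ)))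
        (take'
          (joinList (evens (evens σ))
            (defPrefix
              (fun i =>
                firstVal
                  (fun k' =>
                    E (take' (joinList
                        (defPrefix (pVal (evens (evens σ)) (evens (odds (evens σ)))) σ.length)
                        (odds σ)) k') i)
                  ((joinList
                      (defPrefix (pVal (evens (evens σ)) (evens (odds (evens σ)))) σ.length)
                      (odds σ)).length + 1))
              σ.length))
          k) x)
    ((joinList (evens (evens σ))
        (defPrefix
          (fun i =>
            firstVal
              (fun k' =>
                E (take' (joinList
                    (defPrefix (pVal (evens (evens σ)) (evens (odds (evens σ)))) σ.length)
                    (odds σ)) k') i)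
              ((joinList
                  (defPrefix (pVal (evens (evens σ)) (evens (odds (evens σ)))) σ.length)
                  (odds σ)).length + 1))
          σ.length)).length + 1)

lemma psi1eval_computable {E : List ℕ → ℕ → Option ℕ} (hE : Computable₂ E) :
    Computable₂ (psi1eval E) := by
  -- the prefix of `join p g` computed from σ
  have hj : Computable (fun σ : List ℕ =>
      joinList (defPrefix (pVal (evens (evens σ)) (evens (odds (evens σ)))) σ.length) (odds σ)) := by
    have hF : Computable₂ (fun (σ : List ℕ) (i : ℕ) =>
        pVal (evens (evens σ)) (evens (odds (evens σ))) i) := by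
      have := pVal_computable.comp (α := List ℕ × ℕ)
        ((Primrec.pair
          (Primrec.pair (evens_primrec.comp (evens_primrec.comp Primrec.fst))
            (evens_primrec.comp (odds_primrec.comp (evens_primrec.comp Primrec.fst))))
          Primrec.snd).to_comp)
      exact this.to₂
    have hd := defPrefix_computable hF Primrec.list_length.to_comp
    exact joinList_primrec.to_comp.comp hd odds_primrec.to_comp
  -- the prefix of `y'` computed from σ
  have hrho : Computable (fun σ : List ℕ =>
      defPrefix
        (fun i =>
          firstVal
            (fun k' =>
              E (take' (joinList
                  (defPrefix (pVal (evens (evens σ)) (evens (odds (evens σ)))) σ.length)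
                  (odds σ)) k') i)
            ((joinList
                (defPrefix (pVal (evens (evens σ)) (evens (odds (evens σ)))) σ.length)
                (odds σ)).length + 1))
        σ.length) := by
    have hF : Computable₂ (fun (σ : List ℕ) (i : ℕ) =>
        firstVal
          (fun k' =>
            E (take' (joinList
                (defPrefix (pVal (evens (evens σ)) (evens (odds (evens σ)))) σ.length)
                (odds σ)) k') i)
          ((joinList
              (defPrefix (pVal (evens (evens σ)) (evens (odds (evens σ)))) σ.length)
              (odds σ)).length + 1)) := by
      have hFi : Computable₂ (fun (p : List ℕ × ℕ) (k' : ℕ) =>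
          E (take' (joinList
              (defPrefix (pVal (evens (evens p.1)) (evens (odds (evens p.1)))) p.1.length)
              (odds p.1)) k') p.2) :=
        (hE.comp
          (take'_primrec.to_comp.comp (hj.comp (Computable.fst.comp Computable.fst))
            Computable.snd)
          (Computable.snd.comp Computable.fst)).to₂
      have hni : Computable (fun p : List ℕ × ℕ =>
          (joinList
              (defPrefix (pVal (evens (evens p.1)) (evens (odds (evens p.1)))) p.1.length)
              (odds p.1)).length + 1) :=
        Primrec.succ.to_comp.comp
          (Primrec.list_length.to_comp.comp (hj.comp Computable.fst))
      exact (firstVal_computable hFi hni).to₂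
    exact defPrefix_computable hF Primrec.list_length.to_comp
  -- the prefix of `join f y'`
  have hjb : Computable (fun σ : List ℕ =>
      joinList (evens (evens σ))
        (defPrefix
          (fun i =>
            firstVal
              (fun k' =>
                E (take' (joinList
                    (defPrefix (pVal (evens (evens σ)) (evens (odds (evens σ)))) σ.length)
                    (odds σ)) k') i)
              ((joinList
                  (defPrefix (pVal (evens (evens σ)) (evens (odds (evens σ)))) σ.length)
                  (odds σ)).length + 1))
          σ.length)) :=
    joinList_primrec.to_comp.comp
      ((evens_primrec.comp evens_primrec).to_comp) hrho
  have hF : Computable₂ (fun (p : List ℕ × ℕ) (k : ℕ) =>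
      readGraph (odds (odds (evens p.1)))
        (take'
          (joinList (evens (evens p.1))
            (defPrefix
              (fun i =>
                firstVal
                  (fun k' =>
                    E (take' (joinList
                        (defPrefix (pVal (evens (evens p.1)) (evens (odds (evens p.1)))) p.1.length)
                        (odds p.1)) k') i)
                  ((joinList
                      (defPrefix (pVal (evens (evens p.1)) (evens (odds (evens p.1)))) p.1.length)
                      (odds p.1)).length + 1))
              p.1.length))
          k) p.2) := by
    have := readGraph_primrec.to_comp.comp (α := (List ℕ × ℕ) × ℕ)
      (Computable.pair
        (Computable.pair
          ((odds_primrec.comp (odds_primrec.comp evens_primrec)).to_comp.comp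
            (Computable.fst.comp Computable.fst))
          (take'_primrec.to_comp.comp (hjb.comp (Computable.fst.comp Computable.fst))
            Computable.snd))
        (Computable.snd.comp Computable.fst))
    exact this.to₂
  have hn : Computable (fun p : List ℕ × ℕ =>
      (joinList (evens (evens p.1))
        (defPrefix
          (fun i =>
            firstVal
              (fun k' =>
                E (take' (joinList
                    (defPrefix (pVal (evens (evens p.1)) (evens (odds (evens p.1)))) p.1.length)
                    (odds p.1)) k') i)
              ((joinList
                  (defPrefix (pVal (evens (evens p.1)) (evens (odds (evens p.1)))) p.1.length)
                  (odds p.1)).length + 1))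
          p.1.length)).length + 1) :=
    Primrec.succ.to_comp.comp (Primrec.list_length.to_comp.comp (hjb.comp Computable.fst))
  exact (firstVal_computable hF hn).to₂

def Psi1 (Ψ : Functional) : Functional where
  eval := monoEval (psi1eval Ψ.eval)
  mono := monoEval_mono _
  comp := monoEval_computable (psi1eval_computable Ψ.comp)

/-- the identity functional -/
def IdF : Functional where
  eval σ x := σ[x]?
  mono := by
    intro σ τ x y h hy
    obtain ⟨t, rfl⟩ := h
    have hx : x < σ.length := by
      by_contra hc
      rw [List.getElem?_eq_none (by omega)] at hy
      exact absurd hy (by simp)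
    rwa [List.getElem?_append_left hx]
  comp := Primrec.list_getElem?.to_comp

lemma IdF_total (w : ℕ → ℕ) : IdF.Total w w := by
  intro x
  exact ⟨x + 1, initSeg_getElem? w (Nat.lt_succ_self x)⟩

/-- the forward functional of the strong reduction -/
def Fwd (Φ Ψ : Functional) : Functional where
  eval σ x :=
    if x % 2 = 0 then σ[x / 2]?
    else if (x / 2) % 2 = 0 then some ((Phi1 Φ).graph (x / 2 / 2))
    else some ((Psi1 Ψ).graph (x / 2 / 2))
  mono := by
    intro σ τ x y h hy
    by_cases hx : x % 2 = 0
    · rw [if_pos hx] at hy ⊢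
      obtain ⟨t, rfl⟩ := h
      have hlt : x / 2 < σ.length := by
        by_contra hc
        rw [List.getElem?_eq_none (by omega)] at hy
        exact absurd hy (by simp)
      rwa [List.getElem?_append_left hlt]
    · rw [if_neg hx] at hy ⊢
      exact hy
  comp := by
    have hgraph : ∀ Ξ : Functional, Computable Ξ.graph := by
      intro Ξ
      have : Computable (fun n : ℕ =>
          Ξ.eval (Denumerable.ofNat (List ℕ) n.unpair.1) n.unpair.2) :=
        Ξ.comp.comp ((Primrec.ofNat (List ℕ)).comp
          (Primrec.fst.comp Primrec.unpair)).to_comp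
          ((Primrec.snd.comp Primrec.unpair).to_comp)
      exact Computable.encode.comp this
    have hc1 : Computable (fun p : List ℕ × ℕ => decide (p.2 % 2 = 0)) :=
      (Primrec.eq.comp (Primrec.nat_mod.comp Primrec.snd (Primrec.const 2))
        (Primrec.const 0)).decide.to_comp
    have hc2 : Computable (fun p : List ℕ × ℕ => decide (p.2 / 2 % 2 = 0)) :=
      (Primrec.eq.comp (Primrec.nat_mod.comp
        (Primrec.nat_div.comp Primrec.snd (Primrec.const 2)) (Primrec.const 2))
        (Primrec.const 0)).decide.to_comp
    have hget : Computable (fun p : List ℕ × ℕ => p.1[p.2 / 2]?) :=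
      Primrec.list_getElem?.to_comp.comp Computable.fst
        (Primrec.nat_div.comp Primrec.snd (Primrec.const 2)).to_comp
    have hq : Computable (fun p : List ℕ × ℕ => p.2 / 2 / 2) :=
      (Primrec.nat_div.comp (Primrec.nat_div.comp Primrec.snd (Primrec.const 2))
        (Primrec.const 2)).to_comp
    have hg1 : Computable (fun p : List ℕ × ℕ => some ((Phi1 Φ).graph (p.2 / 2 / 2))) :=
      Computable.option_some.comp ((hgraph (Phi1 Φ)).comp hq)
    have hg2 : Computable (fun p : List ℕ × ℕ => some ((Psi1 Ψ).graph (p.2 / 2 / 2))) :=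
      Computable.option_some.comp ((hgraph (Psi1 Ψ)).comp hq)
    have := Computable.cond hc1 hget (Computable.cond hc2 hg1 hg2)
    exact this.of_eq fun p => by
      by_cases h1 : p.2 % 2 = 0 <;> by_cases h2 : p.2 / 2 % 2 = 0 <;>
        simp [h1, h2]

lemma Fwd_total (Φ Ψ : Functional) (h : ℕ → ℕ) :
    (Fwd Φ Ψ).Total h (join h (join (Phi1 Φ).graph (Psi1 Ψ).graph)) := by
  intro x
  by_cases hx : x % 2 = 0
  · refine ⟨x / 2 + 1, ?_⟩
    show (if x % 2 = 0 then _ else _) = _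
    rw [if_pos hx, initSeg_getElem? h (Nat.lt_succ_self _)]
    have : join h (join (Phi1 Φ).graph (Psi1 Ψ).graph) x = h (x / 2) := by
      rw [join, if_pos hx]
    rw [this]
  · refine ⟨1, ?_⟩
    show (if x % 2 = 0 then _ else _) = _
    rw [if_neg hx]
    have hj : join h (join (Phi1 Φ).graph (Psi1 Ψ).graph) x
        = join (Phi1 Φ).graph (Psi1 Ψ).graph (x / 2) := by
      rw [join, if_neg hx]
    rw [hj, join]
    by_cases h2 : (x / 2) % 2 = 0
    · rw [if_pos h2, if_pos h2]
    · rw [if_neg h2, if_neg h2]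

end Constructions
section Correctness

open Encodable

lemma Functional.total_uniform (Φ : Functional) {f p : ℕ → ℕ} (h : Φ.Total f p) (m : ℕ) :
    ∃ K, ∀ i < m, Φ.eval (initSeg f K) i = some (p i) := by
  induction m with
  | zero => exact ⟨0, fun i hi => absurd hi (by omega)⟩
  | succ m ih =>
    obtain ⟨K, hK⟩ := ih
    obtain ⟨k, hk⟩ := h m
    refine ⟨max K k, fun i hi => ?_⟩
    rcases Nat.lt_succ_iff_lt_or_eq.mp hi with hi' | rfl
    · exact Φ.mono _ _ _ _ (initSeg_prefix f (le_max_left K k)) (hK i hi')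
    · exact Φ.mono _ _ _ _ (initSeg_prefix f (le_max_right K k)) hk

variable {f₀ pQ : ℕ → ℕ} {A B : Functional}

lemma pVal_correct (hA : A.Total f₀ pQ) {m₁ m₃ i y : ℕ}
    (hp : pVal (initSeg f₀ m₁) (initSeg A.graph m₃) i = some y) : y = pQ i := by
  obtain ⟨k, _, hF⟩ := firstVal_some hp
  rw [take'_initSeg] at hF
  exact A.total_eval hA (readGraph_correct hF)

lemma pVal_complete (hA : A.Total f₀ pQ) (m : ℕ) :
    ∃ N, ∀ i < m, ∀ m₁ m₃, N ≤ m₁ → N ≤ m₃ →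
      (pVal (initSeg f₀ m₁) (initSeg A.graph m₃) i).isSome := by
  obtain ⟨K, hK⟩ := A.total_uniform hA m
  refine ⟨Nat.pair (encode (initSeg f₀ K)) m + K + 1, fun i hi m₁ m₃ h1 h3 => ?_⟩
  have hpos : Nat.pair (encode (initSeg f₀ K)) i < m₃ := by
    have := Nat.pair_lt_pair_right (encode (initSeg f₀ K)) hi
    omega
  apply firstVal_isSome (k := K) (by rw [initSeg_length]; omega)
  rw [take'_initSeg, min_eq_left (by omega),
    readGraph_complete (hK i hi) hpos]
  simp

/-- correctness of `Phi1`: any value computed on (a prefix of) a genuine instance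
is a value of `Φ(A(f₀)) = q`. -/
lemma phi1eval_correct {Φ : Functional} {q : ℕ → ℕ} (hA : A.Total f₀ pQ)
    (hΦ : Φ.Total pQ q) {n x y : ℕ}
    (hp : phi1eval Φ.eval (initSeg (join f₀ (join A.graph B.graph)) n) x = some y) :
    y = q x := by
  simp only [phi1eval, initSeg_length, evens_initSeg, odds_initSeg] at hp
  rw [defPrefix_correct (fun i y hy => pVal_correct hA hy) n] at hp
  exact Φ.total_eval hΦ hp

lemma Phi1_eval_correct {Φ : Functional} {q : ℕ → ℕ} (hA : A.Total f₀ pQ)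
    (hΦ : Φ.Total pQ q) {n x y : ℕ}
    (hp : (Phi1 Φ).eval (initSeg (join f₀ (join A.graph B.graph)) n) x = some y) :
    y = q x := by
  obtain ⟨k, _, hF⟩ := monoEval_some hp
  rw [take'_initSeg] at hF
  exact phi1eval_correct hA hΦ hF

lemma Phi1_total {Φ : Functional} {q : ℕ → ℕ} (hA : A.Total f₀ pQ) (hΦ : Φ.Total pQ q) :
    (Phi1 Φ).Total (join f₀ (join A.graph B.graph)) q := by
  intro x
  obtain ⟨m, hm⟩ := hΦ x
  obtain ⟨N, hN⟩ := pVal_complete hA m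
  set n := 4 * N + 4 * m + 16 with hn
  have key : (phi1eval Φ.eval (initSeg (join f₀ (join A.graph B.graph)) n) x).isSome := by
    simp only [phi1eval, initSeg_length, evens_initSeg, odds_initSeg]
    have hbig : m ≤ (defPrefix
        (pVal (initSeg f₀ ((n + 1) / 2)) (initSeg A.graph ((n / 2 + 1) / 2))) n).length := by
      apply defPrefix_big (fun i hi => hN i hi _ _ (by omega) (by omega)) (by omega)
    rw [defPrefix_correct (fun i y hy => pVal_correct hA hy) n]
    rw [Φ.mono _ _ _ _ (initSeg_prefix pQ hbig) hm]
    simp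
  have hs := monoEval_isSome key
  obtain ⟨y, hy⟩ := Option.isSome_iff_exists.mp hs
  have : y = q x := Phi1_eval_correct hA hΦ hy
  exact ⟨n, this ▸ hy⟩

end Correctness
section Psi1Correct

open Encodable

variable {f₀ pQ g y' : ℕ → ℕ} {A B Ψ : Functional}

lemma psi1eval_correct (hA : A.Total f₀ pQ) (hΨ : Ψ.Total (join pQ g) y') {n x y : ℕ}
    (hp : psi1eval Ψ.eval (initSeg (join (join f₀ (join A.graph B.graph)) g) n) x = some y) :
    B.conv (join f₀ y') x y := by
  simp only [psi1eval, initSeg_length, evens_initSeg, odds_initSeg] at hp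
  have hcor1 : ∀ i z, pVal (initSeg f₀ (((n + 1) / 2 + 1) / 2))
      (initSeg A.graph (((n + 1) / 2 / 2 + 1) / 2)) i = some z → z = pQ i :=
    fun i z hz => pVal_correct hA hz
  rw [defPrefix_correct hcor1 n, joinList_initSeg] at hp
  simp only [initSeg_length] at hp
  set M := 2 * ((defPrefix (pVal (initSeg f₀ (((n + 1) / 2 + 1) / 2))
      (initSeg A.graph (((n + 1) / 2 / 2 + 1) / 2))) n).length ⊓ n / 2) with hM
  have hcor2 : ∀ i z, firstVal (fun k' => Ψ.eval (take' (initSeg (join pQ g) M) k') i)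
      (M + 1) = some z → z = y' i := by
    intro i z hz
    obtain ⟨k', _, hE⟩ := firstVal_some hz
    rw [take'_initSeg] at hE
    exact Ψ.total_eval hΨ hE
  rw [defPrefix_correct hcor2 n, joinList_initSeg] at hp
  simp only [initSeg_length] at hp
  obtain ⟨k, _, hRead⟩ := firstVal_some hp
  rw [take'_initSeg] at hRead
  exact ⟨_, readGraph_correct hRead⟩

lemma Psi1_conv_correct (hA : A.Total f₀ pQ) (hΨ : Ψ.Total (join pQ g) y') {x y : ℕ}
    (hc : (Psi1 Ψ).conv (join (join f₀ (join A.graph B.graph)) g) x y) :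
    B.conv (join f₀ y') x y := by
  obtain ⟨k, hk⟩ := hc
  obtain ⟨k', _, hF⟩ := monoEval_some hk
  rw [take'_initSeg] at hF
  exact psi1eval_correct hA hΨ hF

lemma psi1eval_complete (hA : A.Total f₀ pQ) (hΨ : Ψ.Total (join pQ g) y') {x yB : ℕ}
    (hB : B.conv (join f₀ y') x yB) :
    ∃ n, (psi1eval Ψ.eval (initSeg (join (join f₀ (join A.graph B.graph)) g) n) x).isSome := by
  obtain ⟨mB, hmB⟩ := hB
  obtain ⟨K, hK⟩ := Ψ.total_uniform hΨ mB
  obtain ⟨N, hN⟩ := pVal_complete hA K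
  set P := Nat.pair (encode (initSeg (join f₀ y') mB)) x with hP
  refine ⟨8 * (N + K + mB + P) + 64, ?_⟩
  set n := 8 * (N + K + mB + P) + 64 with hn
  simp only [psi1eval, initSeg_length, evens_initSeg, odds_initSeg]
  have hcor1 : ∀ i z, pVal (initSeg f₀ (((n + 1) / 2 + 1) / 2))
      (initSeg A.graph (((n + 1) / 2 / 2 + 1) / 2)) i = some z → z = pQ i :=
    fun i z hz => pVal_correct hA hz
  have hL1big : K ≤ (defPrefix (pVal (initSeg f₀ (((n + 1) / 2 + 1) / 2))
      (initSeg A.graph (((n + 1) / 2 / 2 + 1) / 2))) n).length :=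
    defPrefix_big (fun i hi => hN i hi _ _ (by omega) (by omega)) (by omega)
  rw [defPrefix_correct hcor1 n, joinList_initSeg]
  simp only [initSeg_length]
  set M := 2 * ((defPrefix (pVal (initSeg f₀ (((n + 1) / 2 + 1) / 2))
      (initSeg A.graph (((n + 1) / 2 / 2 + 1) / 2))) n).length ⊓ n / 2) with hM
  have hMK : K ≤ M := by
    rw [hM]; omega
  have hcor2 : ∀ i z, firstVal (fun k' => Ψ.eval (take' (initSeg (join pQ g) M) k') i)
      (M + 1) = some z → z = y' i := by
    intro i z hz
    obtain ⟨k', _, hE⟩ := firstVal_some hz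
    rw [take'_initSeg] at hE
    exact Ψ.total_eval hΨ hE
  have hρsome : ∀ i < mB,
      (firstVal (fun k' => Ψ.eval (take' (initSeg (join pQ g) M) k') i) (M + 1)).isSome := by
    intro i hi
    apply firstVal_isSome (k := K) (by omega)
    rw [take'_initSeg, min_eq_left hMK, hK i hi]
    simp
  have hL2big : mB ≤ (defPrefix (fun i =>
      firstVal (fun k' => Ψ.eval (take' (initSeg (join pQ g) M) k') i) (M + 1)) n).length :=
    defPrefix_big hρsome (by omega)
  rw [defPrefix_correct hcor2 n, joinList_initSeg]
  simp only [initSeg_length]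
  apply firstVal_isSome (k := mB) (by omega)
  rw [take'_initSeg, min_eq_left (by omega),
    readGraph_complete hmB (by rw [← hP]; omega)]
  simp

lemma Psi1_conv_exists (hA : A.Total f₀ pQ) (hΨ : Ψ.Total (join pQ g) y') {x yB : ℕ}
    (hB : B.conv (join f₀ y') x yB) :
    ∃ y, (Psi1 Ψ).conv (join (join f₀ (join A.graph B.graph)) g) x y := by
  obtain ⟨n, hs⟩ := psi1eval_complete hA hΨ hB
  have hs' := monoEval_isSome hs
  obtain ⟨y, hy⟩ := Option.isSome_iff_exists.mp hs'
  exact ⟨y, n, hy⟩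

end Psi1Correct
theorem FOPart_monotone (P Q : Problem) :
    (WRed Q P → SRed (FOPart Q) (FOPart P)) ∧
      (WEquiv Q P → SEquiv (FOPart Q) (FOPart P)) := by
  have main : ∀ P Q : Problem, WRed Q P → SRed (FOPart Q) (FOPart P) := by
    rintro P Q ⟨Φ, Ψ, hred⟩
    refine ⟨Fwd Φ Ψ, IdF, ?_⟩
    rintro h ⟨f₀, A, B, rfl, pQ, hA, hpQ, hB⟩
    obtain ⟨q, hΦq, hq, hback⟩ := hred pQ hpQ
    refine ⟨join (join f₀ (join A.graph B.graph)) (join (Phi1 Φ).graph (Psi1 Ψ).graph),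
      Fwd_total Φ Ψ _, ?_, ?_⟩
    · exact ⟨join f₀ (join A.graph B.graph), Phi1 Φ, Psi1 Ψ, rfl, q, Phi1_total hA hΦq, hq,
        fun g hg => by
          obtain ⟨y', hΨy', hy'Q⟩ := hback g hg
          obtain ⟨yB, hyB⟩ := hB y' hy'Q
          exact Psi1_conv_exists hA hΨy' hyB⟩
    · rintro w ⟨f₂, Φ₂, Ψ₂, p₂, g₂, y₂, heq, hT₂, hp₂, hg₂, hconv₂, rfl⟩
      obtain ⟨hf₂, hgr⟩ := join_inj heq
      obtain ⟨hgr1, hgr2⟩ := join_inj hgr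
      rw [← hf₂] at hT₂ hconv₂
      have he1 : Φ₂.eval = (Phi1 Φ).eval := Functional.eval_eq_of_graph_eq hgr1.symm
      have he2 : Ψ₂.eval = (Psi1 Ψ).eval := Functional.eval_eq_of_graph_eq hgr2.symm
      have hT₂' : (Phi1 Φ).Total (join f₀ (join A.graph B.graph)) p₂ :=
        Functional.total_congr he1 hT₂
      have hp₂q : p₂ = q := (Phi1 Φ).total_unique hT₂' (Phi1_total hA hΦq)
      obtain ⟨y', hΨy', hy'Q⟩ := hback g₂ (hp₂q ▸ hg₂)
      have hconv : (Psi1 Ψ).conv (join (join f₀ (join A.graph B.graph)) g₂) 0 y₂ :=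
        Functional.conv_congr he2 hconv₂
      have hBy := Psi1_conv_correct hA hΨy' hconv
      exact ⟨natSeq y₂, IdF_total _, f₀, A, B, pQ, y', y₂, rfl, hA, hpQ, hy'Q, hBy, rfl⟩
  exact ⟨main P Q, fun hequiv => ⟨main P Q hequiv.1, main Q P hequiv.2⟩⟩
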